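/- (Invariance of the integral invariant of Poincaré–Cartan, linear minor form.) Let n, k be positive integers with k ≤ n, let Φ be a symplectic 2n×2n real matrix (Φᵀ J_{2n} Φ = J_{2n}), and let L be any real 2n×2k matrix. For a subset S ⊆ {1,…,n} with |S| = k, let A_S denote the 2k×2k submatrix of a 2n-row matrix A consisting of the rows with indices {2i−1, 2i : i ∈ S} in increasing order. Then Σ_{|S|=k} det((Φ·L)_S) = Σ_{|S|=k} det(L_S); i.e., the sum of the signed 2k-volume projections onto the symplectic 2k-planes of the parallelepiped spanned by the columns of L is preserved under Φ. -/

import Mathlib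

open Matrix

/-- The standard symplectic matrix `J` on `ℝ^{2m}`, with coordinates ordered in
symplectic pairs `(p₁,q₁,…,p_m,q_m)`. -/
def symplJ (m : ℕ) : Matrix (Fin (2 * m)) (Fin (2 * m)) ℝ :=
  Matrix.of fun i j =>
    if i.val + 1 = j.val ∧ i.val % 2 = 0 then (-1 : ℝ)
    else if j.val + 1 = i.val ∧ j.val % 2 = 0 then 1 else 0

/-- For a `k`-element subset `S ⊆ {1,…,n}`, the increasing enumeration of the
row indices `{2i−1, 2i : i ∈ S}` (0-indexed: `{2i, 2i+1 : i ∈ S}`) of the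
symplectic pairs of rows selected by `S`. -/
def symplRows {n : ℕ} (k : ℕ) (S : Finset (Fin n)) (hS : S.card = k) :
    Fin (2 * k) → Fin (2 * n) := fun a =>
  ⟨2 * (S.orderEmbOfFin hS ⟨a.val / 2, by omega⟩).val + a.val % 2, by
    have h := (S.orderEmbOfFin hS ⟨a.val / 2, by omega⟩).isLt
    omega⟩

/-- The sum over all `k`-element subsets `S ⊆ {1,…,n}` of the determinant of the
`2k × 2k` submatrix `L_S` of `L` consisting of the symplectic pairs of rows
indexed by `S`; this is `(1/k!)·ω^k` evaluated on the columns of `L`, i.e. the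
sum of the signed `2k`-volume projections of the parallelepiped spanned by the
columns of `L` onto the symplectic `2k`-planes. -/
noncomputable def symplMinorSum (n k : ℕ) (L : Matrix (Fin (2 * n)) (Fin (2 * k)) ℝ) : ℝ :=
  ∑ S : {S : Finset (Fin n) // S.card = k}, (L.submatrix (symplRows k S.1 S.2) id).det

namespace PC

def lo {m : ℕ} (i : Fin m) : Fin (2*m) := ⟨2*i.val, by omega⟩
def hi {m : ℕ} (i : Fin m) : Fin (2*m) := ⟨2*i.val+1, by omega⟩

@[simp] lemma lo_val {m : ℕ} (i : Fin m) : (lo i).val = 2*i.val := rfl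
@[simp] lemma hi_val {m : ℕ} (i : Fin m) : (hi i).val = 2*i.val+1 := rfl

lemma lo_or_hi {m : ℕ} (a : Fin (2*m)) :
    a = lo ⟨a.val/2, by omega⟩ ∨ a = hi ⟨a.val/2, by omega⟩ := by
  rcases Nat.mod_two_eq_zero_or_one a.val with h | h
  · left; apply Fin.ext; simp only [lo_val]; omega
  · right; apply Fin.ext; simp only [hi_val]; omega

lemma symplJ_apply (m : ℕ) (x y : Fin (2*m)) :
    symplJ m x y =
      if x.val + 1 = y.val ∧ x.val % 2 = 0 then (-1 : ℝ)
      else if y.val + 1 = x.val ∧ y.val % 2 = 0 then 1 else 0 := rfl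

lemma symplJ_lo_hi (m : ℕ) (i : Fin m) : symplJ m (lo i) (hi i) = -1 := by
  rw [symplJ_apply, if_pos]
  exact ⟨by simp, by simp [Nat.mul_mod_right]⟩

lemma symplJ_hi_lo (m : ℕ) (i : Fin m) : symplJ m (hi i) (lo i) = 1 := by
  rw [symplJ_apply, if_neg, if_pos]
  · exact ⟨by simp, by simp [Nat.mul_mod_right]⟩
  · rintro ⟨h, -⟩
    simp only [lo_val, hi_val] at h
    omega

lemma symplJ_ne_zero {m : ℕ} {x y : Fin (2*m)} (h : symplJ m x y ≠ 0) :
    x.val / 2 = y.val / 2 ∧ x.val ≠ y.val := by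
  rw [symplJ_apply] at h
  split_ifs at h with h1 h2
  · omega
  · omega
  · exact absurd rfl h

section rows
variable {n k : ℕ} (S : Finset (Fin n)) (hS : S.card = k)

lemma symplRows_val (a : Fin (2*k)) :
    (symplRows k S hS a).val
      = 2 * (S.orderEmbOfFin hS ⟨a.val / 2, by omega⟩).val + a.val % 2 := rfl

lemma symplRows_lo (m : Fin k) :
    symplRows k S hS (lo m) = lo (S.orderEmbOfFin hS m) := by
  apply Fin.ext
  rw [symplRows_val]
  have h1 : ((S.orderEmbOfFin hS) (⟨(lo m).val / 2, by omega⟩ : Fin k)).val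
      = ((S.orderEmbOfFin hS) m).val :=
    congrArg (fun t => ((S.orderEmbOfFin hS) t).val) (Fin.ext (by simp only [lo_val]; omega))
  simp only [lo_val] at h1 ⊢
  omega

lemma symplRows_hi (m : Fin k) :
    symplRows k S hS (hi m) = hi (S.orderEmbOfFin hS m) := by
  apply Fin.ext
  rw [symplRows_val]
  have h1 : ((S.orderEmbOfFin hS) (⟨(hi m).val / 2, by omega⟩ : Fin k)).val
      = ((S.orderEmbOfFin hS) m).val :=
    congrArg (fun t => ((S.orderEmbOfFin hS) t).val) (Fin.ext (by simp only [hi_val]; omega))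
  simp only [hi_val] at h1 ⊢
  omega

lemma symplRows_injective : Function.Injective (symplRows k S hS) := by
  intro a b h
  have h' : (symplRows k S hS a).val = (symplRows k S hS b).val := congrArg Fin.val h
  rw [symplRows_val, symplRows_val] at h'
  have hab : (S.orderEmbOfFin hS ⟨a.val / 2, by omega⟩) = (S.orderEmbOfFin hS ⟨b.val / 2, by omega⟩) :=
    Fin.val_injective (by omega)
  have := congrArg Fin.val ((S.orderEmbOfFin hS).injective hab)
  simp only [Fin.val_mk] at this
  exact Fin.ext (by omega)

lemma symplJ_symplRows (c d : Fin (2*k)) :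
    symplJ n (symplRows k S hS c) (symplRows k S hS d) = symplJ k c d := by
  have hsv : ∀ x y : Fin (2*k),
      (S.orderEmbOfFin hS ⟨x.val / 2, by omega⟩).val
        = (S.orderEmbOfFin hS ⟨y.val / 2, by omega⟩).val → x.val / 2 = y.val / 2 := by
    intro x y h
    have h2 := (S.orderEmbOfFin hS).injective (Fin.val_injective h)
    exact congrArg Fin.val h2
  have hsv' : ∀ x y : Fin (2*k), x.val / 2 = y.val / 2 →
      (S.orderEmbOfFin hS ⟨x.val / 2, by omega⟩).val
        = (S.orderEmbOfFin hS ⟨y.val / 2, by omega⟩).val := by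
    intro x y h
    congr 2
    exact Fin.ext h
  have key : ∀ x y : Fin (2*k),
      ((symplRows k S hS x).val + 1 = (symplRows k S hS y).val
          ∧ (symplRows k S hS x).val % 2 = 0)
      ↔ (x.val + 1 = y.val ∧ x.val % 2 = 0) := by
    intro x y
    rw [symplRows_val, symplRows_val]
    constructor
    · rintro ⟨h1, h2⟩
      have hx : x.val % 2 = 0 := by omega
      have hy : y.val % 2 = 1 := by omega
      have := hsv x y (by omega)
      omega
    · rintro ⟨h1, h2⟩
      have := hsv' x y (by omega)
      omega
  rw [symplJ_apply, symplJ_apply, if_congr (key c d) rfl (if_congr (key d c) rfl rfl)]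

lemma image_symplRows :
    Finset.image (symplRows k S hS) Finset.univ
      = S.biUnion (fun i => {lo i, hi i}) := by
  ext x
  simp only [Finset.mem_image, Finset.mem_biUnion, Finset.mem_univ, true_and,
    Finset.mem_insert, Finset.mem_singleton]
  constructor
  · rintro ⟨a, rfl⟩
    refine ⟨S.orderEmbOfFin hS ⟨a.val/2, by omega⟩, Finset.orderEmbOfFin_mem S hS _, ?_⟩
    rcases lo_or_hi a with h | h
    · left
      conv_lhs => rw [h]
      rw [symplRows_lo]
    · right
      conv_lhs => rw [h]
      rw [symplRows_hi]
  · rintro ⟨i, hiS, rfl | rfl⟩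
    · obtain ⟨m, hm⟩ : ∃ m, S.orderEmbOfFin hS m = i := by
        have h := Finset.range_orderEmbOfFin S hS
        have : i ∈ Set.range (S.orderEmbOfFin hS) := by rw [h]; exact_mod_cast hiS
        exact this
      exact ⟨lo m, by rw [symplRows_lo, hm]⟩
    · obtain ⟨m, hm⟩ : ∃ m, S.orderEmbOfFin hS m = i := by
        have h := Finset.range_orderEmbOfFin S hS
        have : i ∈ Set.range (S.orderEmbOfFin hS) := by rw [h]; exact_mod_cast hiS
        exact this
      exact ⟨hi m, by rw [symplRows_hi, hm]⟩

end rows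

section csum

open Equiv Equiv.Perm

variable (k : ℕ)

/-- The interleaving equivalence `Fin k × Fin 2 ≃ Fin (2k)`. -/
def pairEquiv : Fin k × Fin 2 ≃ Fin (2*k) where
  toFun p := ⟨2*p.1.val + p.2.val, by have := p.1.isLt; have := p.2.isLt; omega⟩
  invFun a := (⟨a.val/2, by omega⟩, ⟨a.val%2, by omega⟩)
  left_inv p := by
    have := p.2.isLt
    apply Prod.ext <;> apply Fin.ext <;> simp only [Fin.val_mk] <;> omega
  right_inv a := by apply Fin.ext; simp only [Fin.val_mk]; omega

@[simp] lemma pairEquiv_val (p : Fin k × Fin 2) :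
    (pairEquiv k p).val = 2*p.1.val + p.2.val := rfl

lemma pairEquiv_zero (i : Fin k) : pairEquiv k (i, 0) = lo i := rfl

lemma pairEquiv_one (i : Fin k) : pairEquiv k (i, 1) = hi i := rfl

/-- `flip 0` is the identity, `flip 1` the swap on `Fin 2`. -/
def flip (e : Fin 2) : Equiv.Perm (Fin 2) := if e = 0 then 1 else Equiv.swap 0 1

@[simp] lemma flip_zero : flip 0 = 1 := rfl
@[simp] lemma flip_one : flip 1 = Equiv.swap 0 1 := rfl

/-- The pair-respecting permutation built from a permutation of pairs and flips. -/
def psi (π : Equiv.Perm (Fin k)) (ε : Fin k → Fin 2) : Equiv.Perm (Fin (2*k)) :=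
  (pairEquiv k).permCongr
    ((Equiv.prodCongrLeft (fun _ : Fin 2 => π)) * (Equiv.prodCongrRight (fun i => flip (ε i))))

lemma psi_apply (π : Equiv.Perm (Fin k)) (ε : Fin k → Fin 2) (i : Fin k) (c : Fin 2) :
    psi k π ε (pairEquiv k (i, c)) = pairEquiv k (π i, flip (ε i) c) := by
  simp [psi, Equiv.permCongr_apply, Equiv.symm_apply_apply, Equiv.Perm.mul_apply,
    Equiv.prodCongrRight_apply, Equiv.prodCongrLeft_apply]

lemma sign_psi (π : Equiv.Perm (Fin k)) (ε : Fin k → Fin 2) :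
    Equiv.Perm.sign (psi k π ε) = ∏ i : Fin k, Equiv.Perm.sign (flip (ε i)) := by
  rw [psi, Equiv.Perm.sign_permCongr, _root_.map_mul, Equiv.Perm.sign_prodCongrLeft,
    Equiv.Perm.sign_prodCongrRight]
  rw [Fin.prod_univ_two]
  simp [Int.units_mul_self]

lemma psi_injective :
    Function.Injective (fun pe : Equiv.Perm (Fin k) × (Fin k → Fin 2) => psi k pe.1 pe.2) := by
  rintro ⟨π, ε⟩ ⟨π', ε'⟩ h
  simp only at h
  have key : ∀ i : Fin k, 2*(π i).val + (flip (ε i) 0).val = 2*(π' i).val + (flip (ε' i) 0).val := by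
    intro i
    have h0 := congrArg (fun σ : Equiv.Perm (Fin (2*k)) => (σ (pairEquiv k (i, 0))).val) h
    simpa only [psi_apply, pairEquiv_val] using h0
  have keyval : ∀ i : Fin k, (π i).val = (π' i).val ∧ (ε i).val = (ε' i).val := by
    intro i
    have hk := key i
    have hf : ∀ e : Fin 2, (flip e 0).val = e.val := by decide
    rw [hf (ε i), hf (ε' i)] at hk
    have := (ε i).isLt
    have := (ε' i).isLt
    omega
  have hπ : π = π' := Equiv.ext fun i => Fin.ext (keyval i).1
  have hε : ε = ε' := funext fun i => Fin.ext (keyval i).2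
  rw [hπ, hε]

noncomputable def Csum : ℝ :=
  ∑ σ : Equiv.Perm (Fin (2*k)),
    ((Equiv.Perm.sign σ : ℤ) : ℝ) * ∏ i : Fin k, symplJ k (σ (lo i)) (σ (hi i))

lemma psi_surj_on_good (σ : Equiv.Perm (Fin (2*k)))
    (h : ∀ i : Fin k, symplJ k (σ (lo i)) (σ (hi i)) ≠ 0) :
    ∃ π ε, psi k π ε = σ := by
  have hJ : ∀ i : Fin k, (σ (lo i)).val / 2 = (σ (hi i)).val / 2
      ∧ (σ (lo i)).val ≠ (σ (hi i)).val := fun i => symplJ_ne_zero (h i)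
  set p : Fin k → Fin k := fun i => ⟨(σ (lo i)).val/2, by have := (σ (lo i)).isLt; omega⟩ with hp
  have pinj : Function.Injective p := by
    intro i i' hpe
    by_contra hne
    have hlolo : σ (lo i) ≠ σ (lo i') := fun hc => hne (by
      have := congrArg Fin.val (σ.injective hc); simp only [lo_val] at this
      exact Fin.ext (by omega))
    have hlohi : σ (lo i) ≠ σ (hi i') := fun hc => by
      have := congrArg Fin.val (σ.injective hc); simp only [lo_val, hi_val] at this; omega
    have hhilo : σ (hi i) ≠ σ (lo i') := fun hc => by
      have := congrArg Fin.val (σ.injective hc); simp only [lo_val, hi_val] at this; omega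
    have hhihi : σ (hi i) ≠ σ (hi i') := fun hc => hne (by
      have := congrArg Fin.val (σ.injective hc); simp only [hi_val] at this
      exact Fin.ext (by omega))
    have hv := congrArg Fin.val hpe
    simp only [hp, Fin.val_mk] at hv
    have d1 := Fin.val_injective.ne hlolo
    have d2 := Fin.val_injective.ne hlohi
    have d3 := Fin.val_injective.ne hhilo
    have d4 := Fin.val_injective.ne hhihi
    have e1 := (hJ i).1
    have e2 := (hJ i').1
    have e3 := (hJ i).2
    have e4 := (hJ i').2
    omega
  refine ⟨Equiv.ofBijective p (Finite.injective_iff_bijective.mp pinj),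
    fun i => ⟨(σ (lo i)).val % 2, by omega⟩, ?_⟩
  apply Equiv.ext
  intro x
  obtain ⟨⟨i, c⟩, rfl⟩ : ∃ y, pairEquiv k y = x :=
    ⟨(pairEquiv k).symm x, (pairEquiv k).apply_symm_apply x⟩
  rw [psi_apply]
  have hofb : ∀ j, (Equiv.ofBijective p (Finite.injective_iff_bijective.mp pinj)) j = p j :=
    fun j => rfl
  rw [hofb]
  apply Fin.ext
  rw [pairEquiv_val]
  rcases (by decide : ∀ e : Fin 2, e = 0 ∨ e = 1) c with rfl | rfl
  · rw [pairEquiv_zero]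
    have hflip : ∀ e : Fin 2, (flip e 0).val = e.val := by decide
    rw [hflip]
    simp only [hp, Fin.val_mk]
    omega
  · rw [pairEquiv_one]
    have hflip : ∀ e : Fin 2, (flip e 1).val = 1 - e.val := by decide
    rw [hflip]
    simp only [hp, Fin.val_mk]
    have e1 := (hJ i).1
    have e2 := (hJ i).2
    have h1 := (σ (hi i)).isLt
    have h2 := (σ (lo i)).isLt
    omega

lemma Csum_eq : Csum k = (-1:ℝ)^k * 2^k * (Nat.factorial k) := by
  classical
  rw [Csum]
  rw [← Finset.sum_subset
      (Finset.subset_univ ((Finset.univ : Finset (Equiv.Perm (Fin k) × (Fin k → Fin 2))).image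
        (fun pe => psi k pe.1 pe.2)))
      (fun σ _ hσ => ?_)]
  · rw [Finset.sum_image (fun a _ b _ h => psi_injective k h)]
    have hterm : ∀ pe : Equiv.Perm (Fin k) × (Fin k → Fin 2),
        ((Equiv.Perm.sign (psi k pe.1 pe.2) : ℤ) : ℝ)
          * ∏ i : Fin k, symplJ k (psi k pe.1 pe.2 (lo i)) (psi k pe.1 pe.2 (hi i))
        = (-1:ℝ)^k := by
      rintro ⟨π, ε⟩
      have hfac : ∀ i, symplJ k (psi k π ε (lo i)) (psi k π ε (hi i))
          = -((Equiv.Perm.sign (flip (ε i)) : ℤ) : ℝ) := by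
        intro i
        rw [← pairEquiv_zero, ← pairEquiv_one, psi_apply, psi_apply]
        rcases (by decide : ∀ e : Fin 2, e = 0 ∨ e = 1) (ε i) with h | h <;> rw [h]
        · rw [flip_zero]
          simp only [Equiv.Perm.one_apply]
          rw [pairEquiv_zero, pairEquiv_one, symplJ_lo_hi]
          norm_num
        · rw [flip_one, Equiv.swap_apply_left, Equiv.swap_apply_right, pairEquiv_one,
            pairEquiv_zero, symplJ_hi_lo, Equiv.Perm.sign_swap (show (0:Fin 2) ≠ 1 by decide)]
          norm_num
      have hone : ∀ i : Fin k, ((Equiv.Perm.sign (flip (ε i)) : ℤ) : ℝ)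
          * ((Equiv.Perm.sign (flip (ε i)) : ℤ) : ℝ) = 1 := by
        intro i
        rcases Int.units_eq_one_or (Equiv.Perm.sign (flip (ε i))) with h | h <;> rw [h] <;> norm_num
      have hsgn : ((Equiv.Perm.sign (psi k π ε) : ℤ) : ℝ)
          = ∏ i : Fin k, ((Equiv.Perm.sign (flip (ε i)) : ℤ) : ℝ) := by
        rw [sign_psi]
        push_cast
        rfl
      rw [hsgn, Finset.prod_congr rfl (fun i _ => hfac i)]
      have hneg : ∀ i : Fin k, i ∈ Finset.univ →
          -((Equiv.Perm.sign (flip (ε i)) : ℤ) : ℝ)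
            = (-1) * ((Equiv.Perm.sign (flip (ε i)) : ℤ) : ℝ) := fun i _ => by ring
      rw [Finset.prod_congr rfl hneg, Finset.prod_mul_distrib, Finset.prod_const]
      rw [Finset.card_univ, Fintype.card_fin]
      have hsq : (∏ i : Fin k, ((Equiv.Perm.sign (flip (ε i)) : ℤ) : ℝ))
          * (∏ i : Fin k, ((Equiv.Perm.sign (flip (ε i)) : ℤ) : ℝ)) = 1 := by
        rw [← Finset.prod_mul_distrib, Finset.prod_congr rfl (fun i _ => hone i),
          Finset.prod_const_one]
      calc (∏ i : Fin k, ((Equiv.Perm.sign (flip (ε i)) : ℤ) : ℝ))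
            * ((-1:ℝ)^k * ∏ i : Fin k, ((Equiv.Perm.sign (flip (ε i)) : ℤ) : ℝ))
          = (-1:ℝ)^k * ((∏ i : Fin k, ((Equiv.Perm.sign (flip (ε i)) : ℤ) : ℝ))
            * (∏ i : Fin k, ((Equiv.Perm.sign (flip (ε i)) : ℤ) : ℝ))) := by ring
        _ = (-1:ℝ)^k := by rw [hsq, mul_one]
    rw [Finset.sum_congr rfl (fun pe _ => hterm pe), Finset.sum_const, Finset.card_univ,
      Fintype.card_prod, Fintype.card_perm, Fintype.card_fin, Fintype.card_fun,
      Fintype.card_fin, Fintype.card_fin]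
    rw [nsmul_eq_mul]
    push_cast
    ring
  · by_contra h0
    have hne : ∀ i : Fin k, symplJ k (σ (lo i)) (σ (hi i)) ≠ 0 := by
      intro i hz
      exact h0 (by rw [Finset.prod_eq_zero (Finset.mem_univ i) hz, mul_zero])
    obtain ⟨π, ε, hpe⟩ := psi_surj_on_good k σ hne
    exact absurd (Finset.mem_image.mpr ⟨(π, ε), Finset.mem_univ _, hpe⟩) ‹σ ∉ _›

end csum

section main

open Equiv Matrix

variable (n k : ℕ)

/-- The symplectic bilinear pairing. -/
noncomputable def Bform (x y : Fin (2*n) → ℝ) : ℝ := x ⬝ᵥ (symplJ n *ᵥ y)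

lemma Bform_add_left (x x' y : Fin (2*n) → ℝ) :
    Bform n (x + x') y = Bform n x y + Bform n x' y := add_dotProduct _ _ _

lemma Bform_smul_left (c : ℝ) (x y : Fin (2*n) → ℝ) :
    Bform n (c • x) y = c * Bform n x y := smul_dotProduct _ _ _

lemma Bform_add_right (x y y' : Fin (2*n) → ℝ) :
    Bform n x (y + y') = Bform n x y + Bform n x y' := by
  unfold Bform; rw [mulVec_add, dotProduct_add]

lemma Bform_smul_right (c : ℝ) (x y : Fin (2*n) → ℝ) :
    Bform n x (c • y) = c * Bform n x y := by
  unfold Bform; rw [mulVec_smul, dotProduct_smul, smul_eq_mul]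

lemma Bform_single (x y : Fin (2*n)) :
    Bform n (Pi.single x 1) (Pi.single y 1) = symplJ n x y := by
  unfold Bform
  rw [mulVec_single, single_dotProduct]
  simp

lemma prod_update_eq (v : Fin (2*k) → (Fin (2*n) → ℝ)) (b : Fin (2*k))
    (z : Fin (2*n) → ℝ) :
    ∏ i : Fin k, Bform n (Function.update v b z (lo i)) (Function.update v b z (hi i))
      = Bform n (Function.update v b z (lo (⟨b.val/2, by omega⟩ : Fin k)))
          (Function.update v b z (hi (⟨b.val/2, by omega⟩ : Fin k)))
        * ∏ i ∈ Finset.univ.erase (⟨b.val/2, by omega⟩ : Fin k),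
            Bform n (v (lo i)) (v (hi i)) := by
  rw [← Finset.mul_prod_erase Finset.univ _ (Finset.mem_univ (⟨b.val/2, by omega⟩ : Fin k))]
  congr 1
  refine Finset.prod_congr rfl fun i hi' => ?_
  have hne : i ≠ (⟨b.val/2, by omega⟩ : Fin k) := (Finset.mem_erase.mp hi').1
  have h1 : lo i ≠ b := fun h => hne (Fin.ext (by
    have := congrArg Fin.val h; simp only [lo_val, Fin.val_mk] at this ⊢; omega))
  have h2 : hi i ≠ b := fun h => hne (Fin.ext (by
    have := congrArg Fin.val h; simp only [hi_val, Fin.val_mk] at this ⊢; omega))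
  rw [Function.update_of_ne h1, Function.update_of_ne h2]

lemma update_pair_lo (v : Fin (2*k) → (Fin (2*n) → ℝ)) (b : Fin (2*k)) (hb : b.val % 2 = 0)
    (z : Fin (2*n) → ℝ) :
    Function.update v b z (lo (⟨b.val/2, by omega⟩ : Fin k)) = z
      ∧ Function.update v b z (hi (⟨b.val/2, by omega⟩ : Fin k))
        = v (hi (⟨b.val/2, by omega⟩ : Fin k)) := by
  constructor
  · rw [Function.update_apply, if_pos (Fin.ext (by simp only [lo_val, Fin.val_mk]; omega))]
  · rw [Function.update_apply,
      if_neg (fun h => by have := congrArg Fin.val h; simp only [hi_val, Fin.val_mk] at this; omega)]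

lemma update_pair_hi (v : Fin (2*k) → (Fin (2*n) → ℝ)) (b : Fin (2*k)) (hb : b.val % 2 = 1)
    (z : Fin (2*n) → ℝ) :
    Function.update v b z (hi (⟨b.val/2, by omega⟩ : Fin k)) = z
      ∧ Function.update v b z (lo (⟨b.val/2, by omega⟩ : Fin k))
        = v (lo (⟨b.val/2, by omega⟩ : Fin k)) := by
  constructor
  · rw [Function.update_apply, if_pos (Fin.ext (by simp only [hi_val, Fin.val_mk]; omega))]
  · rw [Function.update_apply,
      if_neg (fun h => by have := congrArg Fin.val h; simp only [lo_val, Fin.val_mk] at this; omega)]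

/-- The product multilinear map `v ↦ ∏ᵢ ω(v₂ᵢ, v₂ᵢ₊₁)`. -/
noncomputable def Gmap : MultilinearMap ℝ (fun _ : Fin (2*k) => (Fin (2*n) → ℝ)) ℝ where
  toFun v := ∏ i : Fin k, Bform n (v (lo i)) (v (hi i))
  map_update_add' := by
    intro dec v b x y
    beta_reduce
    have hdec : dec = instDecidableEqFin (2*k) := Subsingleton.elim _ _
    subst hdec
    rw [prod_update_eq, prod_update_eq, prod_update_eq, ← add_mul]
    congr 1
    rcases Nat.mod_two_eq_zero_or_one b.val with hb | hb
    · rw [(update_pair_lo n k v b hb _).1, (update_pair_lo n k v b hb _).1,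
        (update_pair_lo n k v b hb _).1, (update_pair_lo n k v b hb _).2,
        (update_pair_lo n k v b hb _).2, (update_pair_lo n k v b hb _).2,
        Bform_add_left]
    · rw [(update_pair_hi n k v b hb _).1, (update_pair_hi n k v b hb _).1,
        (update_pair_hi n k v b hb _).1, (update_pair_hi n k v b hb _).2,
        (update_pair_hi n k v b hb _).2, (update_pair_hi n k v b hb _).2,
        Bform_add_right]
  map_update_smul' := by
    intro dec v b c x
    beta_reduce
    have hdec : dec = instDecidableEqFin (2*k) := Subsingleton.elim _ _
    subst hdec
    rw [prod_update_eq, prod_update_eq, smul_eq_mul, ← mul_assoc]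
    congr 1
    rcases Nat.mod_two_eq_zero_or_one b.val with hb | hb
    · rw [(update_pair_lo n k v b hb _).1, (update_pair_lo n k v b hb _).1,
        (update_pair_lo n k v b hb _).2, (update_pair_lo n k v b hb _).2,
        Bform_smul_left]
    · rw [(update_pair_hi n k v b hb _).1, (update_pair_hi n k v b hb _).1,
        (update_pair_hi n k v b hb _).2, (update_pair_hi n k v b hb _).2,
        Bform_smul_right]

lemma Gmap_apply (v : Fin (2*k) → (Fin (2*n) → ℝ)) :
    Gmap n k v = ∏ i : Fin k, Bform n (v (lo i)) (v (hi i)) := rfl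

/-- The minor-sum alternating map. -/
noncomputable def Fmap : ((Fin (2*n) → ℝ) [⋀^Fin (2*k)]→ₗ[ℝ] ℝ) :=
  ∑ S : {S : Finset (Fin n) // S.card = k},
    (Matrix.detRowAlternating).compLinearMap (LinearMap.funLeft ℝ ℝ (symplRows k S.1 S.2))

lemma altmap_sum_apply {ι' : Type*} [DecidableEq ι'] (s : Finset ι')
    (f : ι' → ((Fin (2*n) → ℝ) [⋀^Fin (2*k)]→ₗ[ℝ] ℝ)) (v : Fin (2*k) → (Fin (2*n) → ℝ)) :
    (∑ S ∈ s, f S) v = ∑ S ∈ s, f S v := by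
  induction s using Finset.induction_on with
  | empty => simp
  | insert _ _ h ih => rw [Finset.sum_insert h, Finset.sum_insert h, AlternatingMap.add_apply, ih]

lemma Fmap_apply (v : Fin (2*k) → (Fin (2*n) → ℝ)) :
    Fmap n k v = ∑ S : {S : Finset (Fin n) // S.card = k},
      Matrix.det (Matrix.of fun b a => v b (symplRows k S.1 S.2 a)) := by
  classical
  rw [Fmap, altmap_sum_apply]
  refine Finset.sum_congr rfl fun S _ => ?_
  rw [AlternatingMap.compLinearMap_apply]
  rfl

end main

section eval

open Equiv Matrix

variable (n k : ℕ)

lemma lo_mem_biUnion (S : Finset (Fin n)) (i : Fin n) :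
    lo i ∈ S.biUnion (fun i' => {lo i', hi i'}) ↔ i ∈ S := by
  simp only [Finset.mem_biUnion, Finset.mem_insert, Finset.mem_singleton]
  constructor
  · rintro ⟨i', hi', h | h⟩
    · have := congrArg Fin.val h
      simp only [lo_val] at this
      rwa [show i = i' from Fin.ext (by omega)]
    · have := congrArg Fin.val h
      simp only [lo_val, hi_val] at this
      omega
  · exact fun h => ⟨i, h, Or.inl rfl⟩

lemma hi_mem_biUnion (S : Finset (Fin n)) (i : Fin n) :
    hi i ∈ S.biUnion (fun i' => {lo i', hi i'}) ↔ i ∈ S := by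
  simp only [Finset.mem_biUnion, Finset.mem_insert, Finset.mem_singleton]
  constructor
  · rintro ⟨i', hi', h | h⟩
    · have := congrArg Fin.val h
      simp only [lo_val, hi_val] at this
      omega
    · have := congrArg Fin.val h
      simp only [hi_val] at this
      rwa [show i = i' from Fin.ext (by omega)]
  · exact fun h => ⟨i, h, Or.inr rfl⟩

lemma det_indicator_eq_zero (j : Fin (2*k) → Fin (2*n)) (hj : Function.Injective j)
    (S : Finset (Fin n)) (hS : S.card = k)
    (hne : Finset.image j Finset.univ ≠ Finset.image (symplRows k S hS) Finset.univ) :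
    Matrix.det (Matrix.of fun b a => if symplRows k S hS a = j b then (1:ℝ) else 0) = 0 := by
  have hcards : (Finset.image j Finset.univ).card
      = (Finset.image (symplRows k S hS) Finset.univ).card := by
    rw [Finset.card_image_of_injective _ hj,
      Finset.card_image_of_injective _ (symplRows_injective S hS)]
  obtain ⟨b, hb⟩ : ∃ b, j b ∉ Finset.image (symplRows k S hS) Finset.univ := by
    by_contra hall
    push_neg at hall
    apply hne
    apply Finset.eq_of_subset_of_card_le ?_ (le_of_eq hcards.symm)
    intro x hx
    obtain ⟨b, -, rfl⟩ := Finset.mem_image.mp hx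
    exact hall b
  apply Matrix.det_eq_zero_of_row_eq_zero b
  intro a
  rw [Matrix.of_apply, if_neg]
  exact fun h => hb (Finset.mem_image.mpr ⟨a, Finset.mem_univ a, h⟩)

lemma det_indicator_perm (S : Finset (Fin n)) (hS : S.card = k) (τ : Equiv.Perm (Fin (2*k))) :
    Matrix.det (Matrix.of fun b a =>
        if symplRows k S hS a = symplRows k S hS (τ b) then (1:ℝ) else 0)
      = ((Equiv.Perm.sign τ : ℤ) : ℝ) := by
  have hmat : (Matrix.of fun b a =>
      if symplRows k S hS a = symplRows k S hS (τ b) then (1:ℝ) else 0) = τ.permMatrix ℝ := by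
    ext b a
    rw [Matrix.of_apply, Equiv.Perm.permMatrix, PEquiv.toMatrix_apply, Equiv.toPEquiv_apply]
    by_cases h : τ b = a
    · rw [if_pos (by rw [h]), if_pos (Option.mem_some_iff.mpr h)]
    · rw [if_neg (fun hc => h (symplRows_injective S hS hc).symm),
        if_neg (fun hc => h (Option.mem_some_iff.mp hc))]
  rw [hmat, Matrix.det_permutation]

lemma g_eq_smul_F :
    MultilinearMap.alternatization (Gmap n k) = Csum k • Fmap n k := by
  classical
  apply Module.Basis.ext_alternating (Pi.basisFun ℝ (Fin (2*n)))
  intro j hj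
  have hbasis : ∀ b, (Pi.basisFun ℝ (Fin (2*n))) (j b) = Pi.single (j b) (1:ℝ) :=
    fun b => Pi.basisFun_apply ℝ _ _
  have hL : (MultilinearMap.alternatization (Gmap n k))
        (fun b => (Pi.basisFun ℝ (Fin (2*n))) (j b))
      = ∑ σ : Equiv.Perm (Fin (2*k)), ((Equiv.Perm.sign σ : ℤ) : ℝ)
          * ∏ i : Fin k, symplJ n (j (σ (lo i))) (j (σ (hi i))) := by
    rw [MultilinearMap.alternatization_apply]
    refine Finset.sum_congr rfl fun σ _ => ?_
    rw [MultilinearMap.domDomCongr_apply, Gmap_apply]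
    have : ∀ i : Fin k, i ∈ Finset.univ →
        Bform n ((Pi.basisFun ℝ (Fin (2*n))) (j (σ (lo i))))
          ((Pi.basisFun ℝ (Fin (2*n))) (j (σ (hi i))))
        = symplJ n (j (σ (lo i))) (j (σ (hi i))) := by
      intro i _
      rw [hbasis, hbasis, Bform_single]
    rw [Finset.prod_congr rfl this, Units.smul_def, zsmul_eq_mul]
  have hR : Fmap n k (fun b => (Pi.basisFun ℝ (Fin (2*n))) (j b))
      = ∑ S : {S : Finset (Fin n) // S.card = k},
          Matrix.det (Matrix.of fun b a => if symplRows k S.1 S.2 a = j b then (1:ℝ) else 0) := by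
    rw [Fmap_apply]
    refine Finset.sum_congr rfl fun S _ => ?_
    congr 1
    ext b a
    rw [Matrix.of_apply, Matrix.of_apply, hbasis, Pi.single_apply]
  rw [AlternatingMap.smul_apply, hL, hR, smul_eq_mul]
  by_cases hPC : ∀ i : Fin n,
      (lo i ∈ Finset.image j Finset.univ ↔ hi i ∈ Finset.image j Finset.univ)
  · -- pair-complete case
    set T := Finset.image j Finset.univ with hTdef
    set S₀ : Finset (Fin n) := Finset.univ.filter (fun i => lo i ∈ T) with hS₀
    have hT : T = S₀.biUnion (fun i => {lo i, hi i}) := by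
      ext x
      constructor
      · intro hx
        rcases lo_or_hi x with h | h
        · rw [h] at hx ⊢
          rw [lo_mem_biUnion]
          rw [hS₀, Finset.mem_filter]
          exact ⟨Finset.mem_univ _, hx⟩
        · rw [h] at hx ⊢
          rw [hi_mem_biUnion]
          rw [hS₀, Finset.mem_filter]
          exact ⟨Finset.mem_univ _, (hPC _).mpr hx⟩
      · intro hx
        simp only [Finset.mem_biUnion, Finset.mem_insert, Finset.mem_singleton] at hx
        obtain ⟨i, hiS, rfl | rfl⟩ := hx
        · rw [hS₀, Finset.mem_filter] at hiS
          exact hiS.2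
        · rw [hS₀, Finset.mem_filter] at hiS
          exact (hPC _).mp hiS.2
    have hcard : S₀.card = k := by
      have h1 : T.card = 2*k := by
        rw [hTdef, Finset.card_image_of_injective _ hj, Finset.card_univ, Fintype.card_fin]
      have h2 : (S₀.biUnion (fun i => {lo i, hi i})).card = 2 * S₀.card := by
        rw [Finset.card_biUnion]
        · have : ∀ i ∈ S₀, ({lo i, hi i} : Finset (Fin (2*n))).card = 2 := by
            intro i _
            rw [Finset.card_insert_of_notMem, Finset.card_singleton]
            intro hmem
            have := congrArg Fin.val (Finset.mem_singleton.mp hmem)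
            simp only [lo_val, hi_val] at this
            omega
          rw [Finset.sum_congr rfl this, Finset.sum_const, smul_eq_mul, mul_comm]
        · intro i _ i' _ hne
          rw [Function.onFun, Finset.disjoint_left]
          intro x hx hx'
          simp only [Finset.mem_insert, Finset.mem_singleton] at hx hx'
          apply hne
          apply Fin.ext
          rcases hx with rfl | rfl <;> rcases hx' with h | h <;>
            (have := congrArg Fin.val h; simp only [lo_val, hi_val] at this; omega)
      rw [hT] at h1
      rw [h2] at h1
      omega
    obtain ⟨t, ht⟩ : ∃ t : Fin (2*k) → Fin (2*k), ∀ b, symplRows k S₀ hcard (t b) = j b := by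
      have hex : ∀ b, ∃ a, symplRows k S₀ hcard a = j b := by
        intro b
        have : j b ∈ Finset.image (symplRows k S₀ hcard) Finset.univ := by
          rw [image_symplRows, ← hT, hTdef]
          exact Finset.mem_image_of_mem _ (Finset.mem_univ b)
        obtain ⟨a, -, ha⟩ := Finset.mem_image.mp this
        exact ⟨a, ha⟩
      exact ⟨fun b => (hex b).choose, fun b => (hex b).choose_spec⟩
    have tinj : Function.Injective t := by
      intro b b' h
      apply hj
      rw [← ht b, ← ht b', h]
    let τ : Equiv.Perm (Fin (2*k)) := Equiv.ofBijective t (Finite.injective_iff_bijective.mp tinj)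
    have hτ : ∀ b, symplRows k S₀ hcard (τ b) = j b := ht
    -- left side
    have hsgnsq : ((Equiv.Perm.sign τ : ℤ) : ℝ) * ((Equiv.Perm.sign τ : ℤ) : ℝ) = 1 := by
      rcases Int.units_eq_one_or (Equiv.Perm.sign τ) with h | h <;> rw [h] <;> norm_num
    have hLval : ∑ σ : Equiv.Perm (Fin (2*k)), ((Equiv.Perm.sign σ : ℤ) : ℝ)
          * ∏ i : Fin k, symplJ n (j (σ (lo i))) (j (σ (hi i)))
        = ((Equiv.Perm.sign τ : ℤ) : ℝ) * Csum k := by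
      have hstep : ∀ σ : Equiv.Perm (Fin (2*k)),
          ((Equiv.Perm.sign σ : ℤ) : ℝ) * ∏ i : Fin k, symplJ n (j (σ (lo i))) (j (σ (hi i)))
          = ((Equiv.Perm.sign τ : ℤ) : ℝ)
            * (((Equiv.Perm.sign (τ * σ) : ℤ) : ℝ)
              * ∏ i : Fin k, symplJ k ((τ * σ) (lo i)) ((τ * σ) (hi i))) := by
        intro σ
        have hprd : ∀ i : Fin k, i ∈ Finset.univ →
            symplJ n (j (σ (lo i))) (j (σ (hi i)))
              = symplJ k ((τ * σ) (lo i)) ((τ * σ) (hi i)) := by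
          intro i _
          rw [← hτ (σ (lo i)), ← hτ (σ (hi i)), symplJ_symplRows]
          rfl
        rw [Finset.prod_congr rfl hprd]
        have hs : ((Equiv.Perm.sign (τ * σ) : ℤ) : ℝ)
            = ((Equiv.Perm.sign τ : ℤ) : ℝ) * ((Equiv.Perm.sign σ : ℤ) : ℝ) := by
          rw [_root_.map_mul]
          push_cast
          ring
        rw [hs, ← mul_assoc, ← mul_assoc, hsgnsq, one_mul]
      rw [Finset.sum_congr rfl (fun σ _ => hstep σ), ← Finset.mul_sum]
      congr 1
      rw [Csum]
      exact Equiv.sum_comp (Equiv.mulLeft τ)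
        (fun ρ => ((Equiv.Perm.sign ρ : ℤ) : ℝ) * ∏ i : Fin k, symplJ k (ρ (lo i)) (ρ (hi i)))
    -- right side
    have hRval : ∑ S : {S : Finset (Fin n) // S.card = k},
          Matrix.det (Matrix.of fun b a => if symplRows k S.1 S.2 a = j b then (1:ℝ) else 0)
        = ((Equiv.Perm.sign τ : ℤ) : ℝ) := by
      rw [Finset.sum_eq_single_of_mem (⟨S₀, hcard⟩ : {S : Finset (Fin n) // S.card = k})
        (Finset.mem_univ _)]
      · have : (Matrix.of fun b a => if symplRows k S₀ hcard a = j b then (1:ℝ) else 0)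
            = Matrix.of fun b a =>
                if symplRows k S₀ hcard a = symplRows k S₀ hcard (τ b) then (1:ℝ) else 0 := by
          ext b a
          simp only [Matrix.of_apply]
          rw [← hτ b]
        rw [this, det_indicator_perm]
      · intro S _ hSne
        apply det_indicator_eq_zero n k j hj S.1 S.2
        intro heq
        apply hSne
        apply Subtype.ext
        have hbi : S.1.biUnion (fun i => {lo i, hi i}) = S₀.biUnion (fun i => {lo i, hi i}) := by
          rw [← image_symplRows S.1 S.2, ← heq, ← hTdef]
          exact hT
        ext i
        rw [← lo_mem_biUnion n S.1 i, ← lo_mem_biUnion n S₀ i, hbi]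
    rw [hLval, hRval]
    ring
  · -- not pair-complete: both sides vanish
    have hbad : ∃ x y : Fin (2*n), x ∈ Finset.image j Finset.univ
        ∧ y ∉ Finset.image j Finset.univ ∧ x.val/2 = y.val/2 ∧ x.val ≠ y.val := by
      push_neg at hPC
      obtain ⟨i, hi'⟩ := hPC
      rcases hi' with ⟨hlo, hhi⟩ | ⟨hlo, hhi⟩
      · exact ⟨lo i, hi i, hlo, hhi, by simp only [lo_val, hi_val]; omega,
          by simp only [lo_val, hi_val]; omega⟩
      · exact ⟨hi i, lo i, hhi, hlo, by simp only [lo_val, hi_val]; omega,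
          by simp only [lo_val, hi_val]; omega⟩
    obtain ⟨x, y, hxT, hyT, hxy2, hxyne⟩ := hbad
    obtain ⟨a, -, ha⟩ := Finset.mem_image.mp hxT
    have hprod : ∀ σ : Equiv.Perm (Fin (2*k)),
        ∏ i : Fin k, symplJ n (j (σ (lo i))) (j (σ (hi i))) = 0 := by
      intro σ
      have ha' : σ (σ⁻¹ a) = a := by simp
      apply Finset.prod_eq_zero (Finset.mem_univ (⟨(σ⁻¹ a).val/2, by omega⟩ : Fin k))
      rcases lo_or_hi (σ⁻¹ a) with h | h
      · by_contra hf
        obtain ⟨h2, hne2⟩ := symplJ_ne_zero hf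
        have hx' : j (σ (lo (⟨(σ⁻¹ a).val/2, by omega⟩ : Fin k))) = x := by
          rw [← h, ha', ha]
        have hzT : j (σ (hi (⟨(σ⁻¹ a).val/2, by omega⟩ : Fin k))) ∈ Finset.image j Finset.univ :=
          Finset.mem_image_of_mem _ (Finset.mem_univ _)
        rw [hx'] at h2 hne2
        have : j (σ (hi (⟨(σ⁻¹ a).val/2, by omega⟩ : Fin k))) = y := Fin.ext (by omega)
        exact hyT (this ▸ hzT)
      · by_contra hf
        obtain ⟨h2, hne2⟩ := symplJ_ne_zero hf
        have hx' : j (σ (hi (⟨(σ⁻¹ a).val/2, by omega⟩ : Fin k))) = x := by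
          rw [← h, ha', ha]
        have hzT : j (σ (lo (⟨(σ⁻¹ a).val/2, by omega⟩ : Fin k))) ∈ Finset.image j Finset.univ :=
          Finset.mem_image_of_mem _ (Finset.mem_univ _)
        rw [hx'] at h2 hne2
        have : j (σ (lo (⟨(σ⁻¹ a).val/2, by omega⟩ : Fin k))) = y := Fin.ext (by omega)
        exact hyT (this ▸ hzT)
    have hdets : ∀ S : {S : Finset (Fin n) // S.card = k},
        Matrix.det (Matrix.of fun b a => if symplRows k S.1 S.2 a = j b then (1:ℝ) else 0) = 0 := by
      intro S
      apply det_indicator_eq_zero n k j hj S.1 S.2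
      intro heq
      apply hPC
      intro i
      rw [heq, image_symplRows, lo_mem_biUnion, hi_mem_biUnion]
    rw [Finset.sum_congr rfl (fun σ _ => by rw [hprod σ, mul_zero]),
      Finset.sum_congr rfl (fun S _ => hdets S)]
    simp

end eval

section final

open Equiv Matrix

variable (n k : ℕ)

lemma Bform_invariant (Φ : Matrix (Fin (2*n)) (Fin (2*n)) ℝ)
    (hΦ : Φᵀ * symplJ n * Φ = symplJ n) (x y : Fin (2*n) → ℝ) :
    Bform n (Φ *ᵥ x) (Φ *ᵥ y) = Bform n x y := by
  unfold Bform
  conv_rhs => rw [← hΦ, Matrix.mul_assoc, ← mulVec_mulVec, dotProduct_mulVec, vecMul_transpose]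
  rw [mulVec_mulVec]

lemma g_invariant (Φ : Matrix (Fin (2*n)) (Fin (2*n)) ℝ)
    (hΦ : Φᵀ * symplJ n * Φ = symplJ n) (v : Fin (2*k) → (Fin (2*n) → ℝ)) :
    (MultilinearMap.alternatization (Gmap n k)) (fun b => Φ *ᵥ (v b))
      = (MultilinearMap.alternatization (Gmap n k)) v := by
  rw [MultilinearMap.alternatization_apply, MultilinearMap.alternatization_apply]
  refine Finset.sum_congr rfl fun σ _ => ?_
  congr 1
  rw [MultilinearMap.domDomCongr_apply, MultilinearMap.domDomCongr_apply, Gmap_apply, Gmap_apply]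
  exact Finset.prod_congr rfl fun i _ => Bform_invariant n Φ hΦ _ _

lemma Csum_ne_zero (hk : 0 < k) : Csum k ≠ 0 := by
  rw [Csum_eq]
  apply mul_ne_zero (mul_ne_zero (pow_ne_zero _ (by norm_num)) (pow_ne_zero _ (by norm_num)))
  exact_mod_cast Nat.factorial_ne_zero k

end final

end PC


/-- **Invariance of the integral invariant of Poincaré–Cartan (linear minor
form).**  For a symplectic `2n × 2n` matrix `Φ` and any real `2n × 2k` matrix
`L` (`0 < k ≤ n`), the sum of the signed `2k`-volume projections onto the
symplectic `2k`-planes of the parallelepiped spanned by the columns of `L` is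
preserved under `Φ`. -/
theorem symplMinorSum_invariant (n k : ℕ) (hk : 0 < k) (hkn : k ≤ n)
    (Φ : Matrix (Fin (2 * n)) (Fin (2 * n)) ℝ)
    (hΦ : Φᵀ * symplJ n * Φ = symplJ n)
    (L : Matrix (Fin (2 * n)) (Fin (2 * k)) ℝ) :
    symplMinorSum n k (Φ * L) = symplMinorSum n k L := by
  classical
  have hcols : ∀ (M : Matrix (Fin (2*n)) (Fin (2*k)) ℝ),
      symplMinorSum n k M = PC.Fmap n k (fun b r => M r b) := by
    intro M
    rw [PC.Fmap_apply, symplMinorSum]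
    refine Finset.sum_congr rfl fun S _ => ?_
    rw [← Matrix.det_transpose]
    congr 1
  have happ : ∀ (v : Fin (2*k) → (Fin (2*n) → ℝ)),
      (MultilinearMap.alternatization (PC.Gmap n k)) v = PC.Csum k * PC.Fmap n k v := by
    intro v
    rw [PC.g_eq_smul_F n k, AlternatingMap.smul_apply, smul_eq_mul]
  have hcolmul : (fun b r => (Φ * L) r b) = fun b => Φ *ᵥ (fun r => L r b) := by
    funext b r
    rw [Matrix.mul_apply]
    rfl
  have hmain : PC.Csum k * symplMinorSum n k (Φ * L) = PC.Csum k * symplMinorSum n k L := by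
    rw [hcols, hcols, ← happ, ← happ, hcolmul, PC.g_invariant n k Φ hΦ]
  exact mul_left_cancel₀ (PC.Csum_ne_zero k hk) hmain
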